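/- For a complex unit hypergraph with n ≥ 1 vertices and m ≥ 1 edges, the largest eigenvalue of the Kirchhoff Laplacian satisfies max{Δ, ∇} ≤ λ_max(K), where Δ is the maximum vertex degree and ∇ is the maximum edge size. -/

import Mathlib

open Matrix

/-- Degree of vertex `i`: the number of edges `k` with `ω i k ≠ 0`. -/
noncomputable def deg {n m : ℕ} (ω : Fin n → Fin m → ℂ) (i : Fin n) : ℕ :=
  Nat.card {k : Fin m // ω i k ≠ 0}

/-- Size of edge `k`: the number of vertices `i` with `ω i k ≠ 0`. -/
noncomputable def edgeSize {n m : ℕ} (ω : Fin n → Fin m → ℂ) (k : Fin m) : ℕ :=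
  Nat.card {i : Fin n // ω i k ≠ 0}

/-- Incidence matrix of a complex unit hypergraph. -/
noncomputable def incM {n m : ℕ} (ω : Fin n → Fin m → ℂ) : Matrix (Fin n) (Fin m) ℂ :=
  Matrix.of ω

/-- Largest eigenvalue of a Hermitian matrix. -/
noncomputable def lamMax {N : ℕ} (hN : 0 < N) {M : Matrix (Fin N) (Fin N) ℂ}
    (h : M.IsHermitian) : ℝ :=
  Finset.univ.sup' (Finset.univ_nonempty_iff.mpr ⟨⟨0, hN⟩⟩) h.eigenvalues

lemma re_star_dot {N : ℕ} (z : Fin N → ℂ) :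
    Complex.re (star z ⬝ᵥ z) = ∑ j, ‖z j‖ ^ 2 := by
  simp only [dotProduct, Pi.star_apply, Complex.re_sum]
  refine Finset.sum_congr rfl fun j _ => ?_
  rw [mul_comm, Complex.star_def, Complex.mul_conj, Complex.normSq_eq_norm_sq, Complex.ofReal_re]

lemma rayleigh {N : ℕ} (hN : 0 < N) {M : Matrix (Fin N) (Fin N) ℂ} (h : M.IsHermitian)
    (x : Fin N → ℂ) :
    Complex.re (star x ⬝ᵥ (M *ᵥ x)) ≤ lamMax hN h * ∑ i, ‖x i‖ ^ 2 := by
  set U : Matrix (Fin N) (Fin N) ℂ := ↑h.eigenvectorUnitary with hU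
  set y : Fin N → ℂ := star U *ᵥ x with hy
  have hUU : (star U)ᴴ = U := by
    rw [← Matrix.star_eq_conjTranspose, star_star]
  have hyx : ∀ z, star x ⬝ᵥ (U *ᵥ z) = star y ⬝ᵥ z := by
    intro z
    rw [dotProduct_mulVec]
    congr 1
    rw [hy, star_mulVec, hUU]
  have hkey : star x ⬝ᵥ (M *ᵥ x)
      = star y ⬝ᵥ (diagonal (Complex.ofReal ∘ h.eigenvalues) *ᵥ y) := by
    conv_lhs => rw [h.spectral_theorem, Unitary.conjStarAlgAut_apply]
    rw [← mulVec_mulVec, ← mulVec_mulVec]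
    exact hyx _
  have hnorm : ∑ j, ‖y j‖ ^ 2 = ∑ i, ‖x i‖ ^ 2 := by
    have hs : star y ⬝ᵥ y = star x ⬝ᵥ x := by
      rw [hy, star_mulVec, dotProduct_mulVec, vecMul_vecMul, hUU, hU,
        Matrix.mem_unitaryGroup_iff.mp h.eigenvectorUnitary.2, vecMul_one]
    have h1 := re_star_dot y
    have h2 := re_star_dot x
    rw [hs] at h1
    rw [← h1]; exact h2
  rw [hkey, ← hnorm]
  have hdiag : Complex.re (star y ⬝ᵥ (diagonal (Complex.ofReal ∘ h.eigenvalues) *ᵥ y))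
      = ∑ j, h.eigenvalues j * ‖y j‖ ^ 2 := by
    simp only [dotProduct, mulVec_diagonal, Pi.star_apply, Complex.re_sum,
      Function.comp_apply]
    refine Finset.sum_congr rfl fun j _ => ?_
    rw [show star (y j) * ((h.eigenvalues j : ℂ) * y j)
        = (h.eigenvalues j : ℂ) * (y j * star (y j)) by ring,
      Complex.star_def, Complex.mul_conj, Complex.normSq_eq_norm_sq, ← Complex.ofReal_mul, Complex.ofReal_re]
  rw [hdiag, Finset.mul_sum]
  refine Finset.sum_le_sum fun j _ => ?_
  have hle : h.eigenvalues j ≤ lamMax hN h := Finset.le_sup' _ (Finset.mem_univ j)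
  exact mul_le_mul_of_nonneg_right hle (by positivity)

/-- For a complex unit hypergraph with `n ≥ 1` vertices and `m ≥ 1` edges,
`max{Δ, ∇} ≤ λ_max(K)`. -/
theorem stmt19 (n m : ℕ) (hn : 0 < n) (hm : 0 < m) (ω : Fin n → Fin m → ℂ)
    (hω : ∀ i k, ω i k = 0 ∨ ‖ω i k‖ = 1) :
    ((max (Finset.univ.sup (deg ω)) (Finset.univ.sup (edgeSize ω)) : ℕ) : ℝ) ≤
      lamMax hn (Matrix.isHermitian_mul_conjTranspose_self (incM ω)) := by
  classical
  set B := incM ω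
  set K := B * Bᴴ
  set hK := Matrix.isHermitian_mul_conjTranspose_self (incM ω)
  set L := lamMax hn hK with hL
  -- quadratic form as norm of Bᴴ x
  have hquad : ∀ x : Fin n → ℂ,
      Complex.re (star x ⬝ᵥ (K *ᵥ x)) = ∑ j, ‖(Bᴴ *ᵥ x) j‖ ^ 2 := by
    intro x
    have : star x ⬝ᵥ (K *ᵥ x) = star (Bᴴ *ᵥ x) ⬝ᵥ (Bᴴ *ᵥ x) := by
      rw [show K *ᵥ x = B *ᵥ (Bᴴ *ᵥ x) from (mulVec_mulVec ..).symm,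
        dotProduct_mulVec, star_mulVec, conjTranspose_conjTranspose]
    rw [this, re_star_dot]
  have hray : ∀ x : Fin n → ℂ,
      ∑ j, ‖(Bᴴ *ᵥ x) j‖ ^ 2 ≤ L * ∑ i, ‖x i‖ ^ 2 := by
    intro x
    rw [← hquad]
    exact rayleigh hn hK x
  -- L ≥ 0
  have hL0 : 0 ≤ L := by
    have := hray (Pi.single ⟨0, hn⟩ 1)
    have hx : ∑ i, ‖(Pi.single (M := fun _ => ℂ) ⟨0, hn⟩ 1 : Fin n → ℂ) i‖ ^ 2 = 1 := by
      rw [Finset.sum_eq_single ⟨0, hn⟩] <;> simp +contextual [Pi.single_apply]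
    rw [hx, mul_one] at this
    exact le_trans (Finset.sum_nonneg fun j _ => by positivity) this
  -- norms squared are 0/1
  have hval : ∀ i k, ‖ω i k‖ ^ 2 = if ω i k ≠ 0 then 1 else 0 := by
    intro i k
    rcases hω i k with h | h
    · simp [h]
    · have hne : ω i k ≠ 0 := fun h0 => by simp [h0] at h
      simp [h, hne]
  -- deg bound
  have hdeg : ∀ i : Fin n, (deg ω i : ℝ) ≤ L := by
    intro i
    have := hray (Pi.single i 1)
    have hBx : ∀ j, (Bᴴ *ᵥ Pi.single i 1) j = star (ω i j) := by
      intro j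
      simp [mulVec, dotProduct, conjTranspose_apply, Pi.single_apply, B, incM]
    have hx : ∑ i', ‖(Pi.single (M := fun _ => ℂ) i 1 : Fin n → ℂ) i'‖ ^ 2 = 1 := by
      rw [Finset.sum_eq_single i] <;> simp +contextual [Pi.single_apply]
    rw [hx, mul_one] at this
    refine le_trans (le_of_eq ?_) this
    simp only [hBx, norm_star]
    rw [show (∑ j, ‖ω i j‖ ^ 2) = ∑ j, if ω i j ≠ 0 then (1:ℝ) else 0 from
      Finset.sum_congr rfl fun j _ => hval i j]
    rw [Finset.sum_boole]
    congr 1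
    simp [deg, Nat.card_eq_fintype_card, Fintype.card_subtype]
  -- edgeSize bound
  have hedge : ∀ k : Fin m, (edgeSize ω k : ℝ) ≤ L := by
    intro k
    set x : Fin n → ℂ := fun i => ω i k with hxdef
    have hxsum : ∑ i, ‖x i‖ ^ 2 = (edgeSize ω k : ℝ) := by
      rw [show (∑ i, ‖x i‖ ^ 2) = ∑ i, if ω i k ≠ 0 then (1:ℝ) else 0 from
        Finset.sum_congr rfl fun i _ => hval i k]
      rw [Finset.sum_boole]
      congr 1
      simp [edgeSize, Nat.card_eq_fintype_card, Fintype.card_subtype]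
    have hBxk : (Bᴴ *ᵥ x) k = (edgeSize ω k : ℝ) := by
      simp only [mulVec, dotProduct, conjTranspose_apply, B, incM, of_apply, hxdef]
      rw [show (∑ i, star (ω i k) * ω i k) = ∑ i, ((‖ω i k‖ ^ 2 : ℝ) : ℂ) from
        Finset.sum_congr rfl fun i _ => by
          rw [Complex.star_def, mul_comm, Complex.mul_conj, Complex.normSq_eq_norm_sq, Complex.ofReal_pow]]
      rw [← Complex.ofReal_sum]
      exact_mod_cast congrArg (Complex.ofReal) hxsum
    have hge : ((edgeSize ω k : ℝ)) ^ 2 ≤ ∑ j, ‖(Bᴴ *ᵥ x) j‖ ^ 2 := by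
      calc ((edgeSize ω k : ℝ)) ^ 2 = ‖(Bᴴ *ᵥ x) k‖ ^ 2 := by
            rw [hBxk]; rw [Complex.norm_real, Real.norm_natCast]
        _ ≤ ∑ j, ‖(Bᴴ *ᵥ x) j‖ ^ 2 :=
            Finset.single_le_sum (f := fun j => ‖(Bᴴ *ᵥ x) j‖ ^ 2)
              (fun j _ => by positivity) (Finset.mem_univ k)
    have := le_trans hge (hray x)
    rw [hxsum] at this
    rcases Nat.eq_zero_or_pos (edgeSize ω k) with h0 | hpos
    · rw [h0]; simpa using hL0
    · have hp : (0:ℝ) < (edgeSize ω k : ℝ) := by exact_mod_cast hpos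
      nlinarith
  rw [Nat.cast_max]
  apply max_le
  · obtain ⟨i, -, hi⟩ := Finset.exists_mem_eq_sup Finset.univ
      (Finset.univ_nonempty_iff.mpr ⟨⟨0, hn⟩⟩) (deg ω)
    rw [hi]; exact hdeg i
  · obtain ⟨k, -, hk⟩ := Finset.exists_mem_eq_sup Finset.univ
      (Finset.univ_nonempty_iff.mpr ⟨⟨0, hm⟩⟩) (edgeSize ω)
    rw [hk]; exact hedge k
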